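/- The gonality of the Ferrers rook graph of the Ferrers diagram with row lengths (4,2,2) equals 4. -/

import Mathlib

open Finset

open scoped Classical

/-- A divisor is effective if it is nonnegative everywhere. -/
def Effective {V : Type*} (D : V → ℤ) : Prop := ∀ v, 0 ≤ D v

/-- The degree of a divisor: the total number of chips. -/
def degD {V : Type*} [Fintype V] (D : V → ℤ) : ℤ := ∑ v, D v

/-- The effect on a vertex `w` of firing each vertex `u` with multiplicity `f u`. -/
noncomputable def lap {V : Type*} [Fintype V] (G : SimpleGraph V) (f : V → ℤ) (w : V) : ℤ :=
  (∑ u, f u * (if G.Adj u w then 1 else 0)) - f w * (∑ u, if G.Adj u w then (1 : ℤ) else 0)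

/-- Two divisors are (chip-firing) equivalent if one is obtained from the other by a
sequence of chip-firing moves, i.e. they differ by a Laplacian of some `f : V → ℤ`. -/
def LinEquiv {V : Type*} [Fintype V] (G : SimpleGraph V) (D D' : V → ℤ) : Prop :=
  ∃ f : V → ℤ, ∀ w, D' w = D w + lap G f w

/-- A divisor has positive rank if for every vertex there is an equivalent effective
divisor with a chip at that vertex. -/
def PositiveRank {V : Type*} [Fintype V] (G : SimpleGraph V) (D : V → ℤ) : Prop :=
  ∀ v, ∃ D', LinEquiv G D D' ∧ Effective D' ∧ 0 < D' v

/-- A Ferrers diagram: a finite subset of ℕ² with coordinates ≥ 1, closed under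
decreasing either coordinate toward 1. -/
def IsFerrers (F : Finset (ℕ × ℕ)) : Prop :=
  ∀ p ∈ F, 1 ≤ p.1 ∧ 1 ≤ p.2 ∧ (p.1 = 1 ∨ (p.1 - 1, p.2) ∈ F) ∧ (p.2 = 1 ∨ (p.1, p.2 - 1) ∈ F)

/-- The Ferrers rook graph: vertices are points of `F`, two distinct points adjacent
iff they share a row or a column. -/
def rookGraph (F : Finset (ℕ × ℕ)) : SimpleGraph {p // p ∈ F} where
  Adj a b := a ≠ b ∧ ((a : ℕ × ℕ).1 = (b : ℕ × ℕ).1 ∨ (a : ℕ × ℕ).2 = (b : ℕ × ℕ).2)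
  symm := ⟨fun a b h => ⟨h.1.symm, h.2.imp Eq.symm Eq.symm⟩⟩
  loopless := ⟨fun a h => h.1 rfl⟩

/-- The set of degrees of positive-rank divisors on `R(F)`; its least element is the gonality. -/
def gonSet (F : Finset (ℕ × ℕ)) : Set ℤ :=
  {d | ∃ D : {p // p ∈ F} → ℤ, PositiveRank (rookGraph F) D ∧ degD D = d}

/-- The divisor `D_{x,y}`: one chip on each vertex not in column `x` and not in row `y`. -/
def Dxy (F : Finset (ℕ × ℕ)) (x y : ℕ) : {p // p ∈ F} → ℤ :=
  fun p => if (p : ℕ × ℕ).1 ≠ x ∧ (p : ℕ × ℕ).2 ≠ y then 1 else 0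

def F4 : Finset (ℕ × ℕ) := {(1, 1), (2, 1), (3, 1), (4, 1), (1, 2), (2, 2), (1, 3), (2, 3)}


/- ===================== auxiliary development ===================== -/

namespace Gon18

abbrev V4 := {p // p ∈ F4}

instance rookAdjDec : DecidableRel (rookGraph F4).Adj := fun a b =>
  inferInstanceAs (Decidable (a ≠ b ∧ ((a : ℕ × ℕ).1 = (b : ℕ × ℕ).1 ∨ (a : ℕ × ℕ).2 = (b : ℕ × ℕ).2)))

def pts : Fin 8 → ℕ × ℕ := ![(1,1),(2,1),(3,1),(4,1),(1,2),(2,2),(1,3),(2,3)]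

lemma pts_mem : ∀ i, pts i ∈ F4 := by decide

def σ8 (i : Fin 8) : V4 := ⟨pts i, pts_mem i⟩

lemma σ8_bij : Function.Bijective σ8 := ⟨by decide, by decide⟩

noncomputable def e8 : Fin 8 ≃ V4 := Equiv.ofBijective σ8 σ8_bij

lemma σ8_symm (v : V4) : σ8 (e8.symm v) = v := e8.apply_symm_apply v
lemma symm_σ8 (i : Fin 8) : e8.symm (σ8 i) = i := e8.symm_apply_apply i

def adjB (i j : Fin 8) : Bool :=
  decide (pts i ≠ pts j ∧ ((pts i).1 = (pts j).1 ∨ (pts i).2 = (pts j).2))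

lemma adjB_iff : ∀ i j : Fin 8, (adjB i j = true) ↔ (rookGraph F4).Adj (σ8 i) (σ8 j) := by decide

def lapN (g : Fin 8 → ℤ) (w : Fin 8) : ℤ :=
  (∑ u, g u * (if adjB u w then 1 else 0)) - g w * (∑ u, if adjB u w then (1:ℤ) else 0)

lemma sum_V4 (F : V4 → ℤ) : ∑ u, F u = ∑ i, F (σ8 i) := (Equiv.sum_comp e8 F).symm

def adjV (a b : V4) : Bool := decide ((rookGraph F4).Adj a b)

lemma ite_adjV {α : Type*} (a b : V4) (x y : α) [inst : Decidable ((rookGraph F4).Adj a b)] :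
    (if (rookGraph F4).Adj a b then x else y) = (if adjV a b then x else y) := by
  by_cases h : (rookGraph F4).Adj a b
  · rw [if_pos h, if_pos (by simpa [adjV] using h)]
  · rw [if_neg h, if_neg (by simpa [adjV] using h)]

lemma adjV_σ8 : ∀ i j : Fin 8, adjV (σ8 i) (σ8 j) = adjB i j := by decide

lemma lap_eq_lapN (f : V4 → ℤ) (w : Fin 8) :
    lap (rookGraph F4) f (σ8 w) = lapN (fun i => f (σ8 i)) w := by
  unfold lap lapN
  simp only [ite_adjV]
  rw [sum_V4 (fun u => f u * (if adjV u (σ8 w) then (1:ℤ) else 0)),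
      sum_V4 (fun u => if adjV u (σ8 w) then (1:ℤ) else 0)]
  simp only [adjV_σ8]

lemma degD_eq (f : V4 → ℤ) : degD f = ∑ i, f (σ8 i) := sum_V4 f

lemma sum_lap {V : Type*} [Fintype V] (G : SimpleGraph V) (f : V → ℤ) :
    ∑ w, lap G f w = 0 := by
  have hsym : ∀ u w : V, (if G.Adj u w then (1:ℤ) else 0) = (if G.Adj w u then (1:ℤ) else 0) := by
    intro u w
    by_cases h : G.Adj u w
    · rw [if_pos h, if_pos (G.adj_symm h)]
    · rw [if_neg h, if_neg fun h' => h (G.adj_symm h')]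
  unfold lap
  rw [Finset.sum_sub_distrib, sub_eq_zero, Finset.sum_comm]
  apply Finset.sum_congr rfl
  intro u _
  rw [Finset.mul_sum]
  exact Finset.sum_congr rfl fun w _ => by rw [hsym]

lemma lap_add {V : Type*} [Fintype V] (G : SimpleGraph V) (f g : V → ℤ) (w : V) :
    lap G (fun v => f v + g v) w = lap G f w + lap G g w := by
  simp only [lap, add_mul, Finset.sum_add_distrib]
  ring

lemma lap_neg {V : Type*} [Fintype V] (G : SimpleGraph V) (f : V → ℤ) (w : V) :
    lap G (fun v => -(f v)) w = -(lap G f w) := by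
  simp only [lap, neg_mul, Finset.sum_neg_distrib]
  ring

lemma linEquiv_symm {V : Type*} [Fintype V] {G : SimpleGraph V} {D D' : V → ℤ}
    (h : LinEquiv G D D') : LinEquiv G D' D := by
  obtain ⟨f, hf⟩ := h
  exact ⟨fun v => -(f v), fun w => by rw [hf w, lap_neg]; ring⟩

lemma linEquiv_trans {V : Type*} [Fintype V] {G : SimpleGraph V} {D D' D'' : V → ℤ}
    (h : LinEquiv G D D') (h' : LinEquiv G D' D'') : LinEquiv G D D'' := by
  obtain ⟨f, hf⟩ := h
  obtain ⟨g, hg⟩ := h'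
  exact ⟨fun v => f v + g v, fun w => by rw [hg w, hf w, lap_add]; ring⟩

lemma degD_of_linEquiv {V : Type*} [Fintype V] {G : SimpleGraph V} {D D' : V → ℤ}
    (h : LinEquiv G D D') : degD D' = degD D := by
  obtain ⟨f, hf⟩ := h
  unfold degD
  calc ∑ v, D' v = ∑ v, (D v + lap G f v) := Finset.sum_congr rfl fun v _ => hf v
    _ = (∑ v, D v) + ∑ v, lap G f v := Finset.sum_add_distrib
    _ = ∑ v, D v := by rw [sum_lap]; ring

end Gon18
namespace Gon18

def outS (S : Finset (Fin 8)) (v : Fin 8) : ℕ :=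
  (univ.filter (fun u => adjB u v = true ∧ u ∉ S)).card

def nbrB (B : Fin 8 → Bool) (v : Fin 8) : ℕ :=
  (univ.filter (fun u => B u = true ∧ adjB u v = true)).card

def stepF (e : Fin 8 → ℕ) (B : Fin 8 → Bool) : Fin 8 → Bool :=
  fun v => B v || decide (e v < nbrB B v)

def burnF (e : Fin 8 → ℕ) (q : Fin 8) : ℕ → Fin 8 → Bool
  | 0 => fun v => decide (v = q)
  | k+1 => stepF e (burnF e q k)

def getB (B : List Bool) (v : Fin 8) : Bool := B.getD (v:ℕ) false

def stepL (e : Fin 8 → ℕ) (B : List Bool) : List Bool :=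
  (List.finRange 8).map (fun v => getB B v || decide (e v < nbrB (getB B) v))

def burnL (e : Fin 8 → ℕ) (q : Fin 8) : ℕ → List Bool
  | 0 => (List.finRange 8).map (fun v => decide (v = q))
  | k+1 => stepL e (burnL e q k)

def BurnsAllL (e : Fin 8 → ℕ) (q : Fin 8) : Bool := (burnL e q 4).all (fun x => x)

lemma getB_map (f : Fin 8 → Bool) (v : Fin 8) :
    getB ((List.finRange 8).map f) v = f v := by fin_cases v <;> rfl

lemma burnL_eq (e : Fin 8 → ℕ) (q : Fin 8) : ∀ k, getB (burnL e q k) = burnF e q k := by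
  intro k
  induction k with
  | zero => funext v; exact getB_map _ v
  | succ k ih =>
    funext v
    show getB (stepL e (burnL e q k)) v = stepF e (burnF e q k) v
    unfold stepL
    rw [getB_map, ih]
    rfl

lemma burnL_len (e : Fin 8 → ℕ) (q : Fin 8) : ∀ k, (burnL e q k).length = 8 := by
  intro k
  cases k with
  | zero => simp [burnL]
  | succ k => simp [burnL, stepL]

lemma burnsAllL_sound (e : Fin 8 → ℕ) (q : Fin 8) (h : BurnsAllL e q = true) :
    ∀ v, burnF e q 4 v = true := by
  intro v
  rw [← burnL_eq]
  unfold BurnsAllL at h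
  rw [List.all_eq_true] at h
  have hv : (v : ℕ) < (burnL e q 4).length := by rw [burnL_len]; exact v.isLt
  unfold getB
  rw [List.getD_eq_getElem _ _ hv]
  exact h _ (List.getElem_mem hv)

lemma burn_sound (e : Fin 8 → ℕ) (q : Fin 8) (h : ∀ v, burnF e q 4 v = true)
    (S : Finset (Fin 8)) (hne : S.Nonempty) (hq : q ∉ S) :
    ∃ v ∈ S, e v < outS S v := by
  have key : ∀ k, (∃ v ∈ S, burnF e q k v = true) → ∃ v ∈ S, e v < outS S v := by
    intro k
    induction k with
    | zero =>
      rintro ⟨v, hv, hb⟩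
      have : v = q := by simpa [burnF] using hb
      exact absurd (this ▸ hv) hq
    | succ k ih =>
      rintro ⟨v, hv, hb⟩
      by_cases hall : ∃ w ∈ S, burnF e q k w = true
      · exact ih hall
      push_neg at hall
      have hbv : burnF e q k v = false :=
        Bool.eq_false_iff.2 (hall v hv)
      have hlt : e v < nbrB (burnF e q k) v := by
        have : stepF e (burnF e q k) v = true := hb
        unfold stepF at this
        rw [hbv] at this
        simpa using this
      refine ⟨v, hv, lt_of_lt_of_le hlt ?_⟩
      apply Finset.card_le_card
      intro u hu
      simp only [Finset.mem_filter, Finset.mem_univ, true_and] at hu ⊢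
      refine ⟨hu.2, fun huS => ?_⟩
      exact Bool.eq_false_iff.1 (Bool.eq_false_iff.2 (hall u huS)) hu.1
  obtain ⟨v, hv⟩ := hne
  exact key 4 ⟨v, hv, h v⟩

end Gon18
namespace Gon18

lemma lapN_eq_sum (g : Fin 8 → ℤ) (v : Fin 8) :
    lapN g v = ∑ u, (g u - g v) * (if adjB u v then 1 else 0) := by
  unfold lapN
  rw [Finset.mul_sum, ← Finset.sum_sub_distrib]
  exact Finset.sum_congr rfl fun u _ => by ring

lemma fire_max (eZ g : Fin 8 → ℤ) (q : Fin 8)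
    (hq0 : eZ q = 0) (heff : ∀ v, 0 ≤ eZ v + lapN g v) (hpos : 0 < eZ q + lapN g q) :
    ∃ S : Finset (Fin 8), S.Nonempty ∧ q ∉ S ∧ ∀ v ∈ S, (outS S v : ℤ) ≤ eZ v := by
  obtain ⟨m, -, hm⟩ := Finset.exists_max_image univ g ⟨q, Finset.mem_univ q⟩
  set S : Finset (Fin 8) := univ.filter (fun v => g v = g m) with hS
  have hmS : m ∈ S := by simp [hS]
  have hqS : q ∉ S := by
    intro hqmem
    have hgq : g q = g m := by simpa [hS] using hqmem
    have hle : lapN g q ≤ 0 := by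
      rw [lapN_eq_sum]
      apply Finset.sum_nonpos
      intro u _
      apply mul_nonpos_of_nonpos_of_nonneg
      · have := hm u (Finset.mem_univ u)
        omega
      · positivity
    omega
  refine ⟨S, ⟨m, hmS⟩, hqS, ?_⟩
  intro v hv
  have hgv : g v = g m := by simpa [hS] using hv
  have hbound : lapN g v ≤ -(outS S v : ℤ) := by
    rw [lapN_eq_sum]
    unfold outS
    rw [Finset.card_filter]
    push_cast
    rw [← Finset.sum_neg_distrib]
    apply Finset.sum_le_sum
    intro u _
    by_cases hadj : adjB u v = true
    · by_cases huS : u ∈ S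
      · have : g u = g m := by simpa [hS] using huS
        simp only [hadj, if_true, huS, not_true, and_false, if_false]
        rw [hgv, this]
        simp
      · have h1 : g u ≠ g m := by
          intro hk
          exact huS (by simp [hS, hk])
        have h2 : g u ≤ g m := hm u (Finset.mem_univ u)
        simp only [hadj, if_true, huS, not_false_iff, and_true, and_self, if_true]
        rw [hgv]
        have : g u ≤ g m - 1 := by omega
        nlinarith
    · simp only [hadj, if_false]
      simp [hadj]
  have := heff v
  omega

end Gon18
namespace Gon18

def cnt (a b c : Fin 9) (v : Fin 8) : ℕ :=
  (if (a:ℕ) = (v:ℕ) then 1 else 0) + (if (b:ℕ) = (v:ℕ) then 1 else 0)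
    + (if (c:ℕ) = (v:ℕ) then 1 else 0)

def chi (j : Fin 9) : Fin 8 → ℤ := fun v => if (j:ℕ) = (v:ℕ) then 1 else 0

def eZf (a b c j : Fin 9) : Fin 8 → ℤ := fun v => (cnt a b c v : ℤ) + lapN (chi j) v

set_option maxRecDepth 100000 in
set_option maxHeartbeats 4000000 in
lemma claim1 : ∀ a b c : Fin 9,
    ((a:ℕ) = (b:ℕ) ∧ (b:ℕ) = (c:ℕ) ∧ 2 ≤ (a:ℕ) ∧ (a:ℕ) < 8) ∨
    ∃ q : Fin 8, cnt a b c q = 0 ∧ BurnsAllL (cnt a b c) q = true := by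
  decide

set_option maxRecDepth 100000 in
set_option maxHeartbeats 1000000 in
lemma claim2 : ∀ t : Fin 8, 2 ≤ (t:ℕ) → ∃ q : Fin 8,
    (∀ v, 0 ≤ eZf t.castSucc t.castSucc t.castSucc t.castSucc v) ∧
    eZf t.castSucc t.castSucc t.castSucc t.castSucc q = 0 ∧
    BurnsAllL (fun v => (eZf t.castSucc t.castSucc t.castSucc t.castSucc v).toNat) q = true := by
  decide

lemma lapN_chi8 : ∀ v, lapN (chi 8) v = 0 := by decide

lemma pack : ∀ a b c : Fin 9, ∃ j : Fin 9, ∃ q : Fin 8,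
    (∀ v, 0 ≤ eZf a b c j v) ∧ eZf a b c j q = 0 ∧
    BurnsAllL (fun v => (eZf a b c j v).toNat) q = true := by
  intro a b c
  rcases claim1 a b c with ⟨hab, hbc, h2, h8⟩ | ⟨q, hq0, hburn⟩
  · set t : Fin 8 := ⟨(a:ℕ), h8⟩ with ht
    have hat : a = t.castSucc := by
      apply Fin.ext
      simp [ht]
    have hbt : b = t.castSucc := by
      apply Fin.ext
      simp [ht, ← hab]
    have hct : c = t.castSucc := by
      apply Fin.ext
      simp [ht, ← hab, ← hbc]
    obtain ⟨q, h1, h2', h3⟩ := claim2 t (by simpa [ht] using h2)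
    exact ⟨t.castSucc, q, by rw [hat, hbt, hct]; exact ⟨h1, h2', h3⟩⟩
  · refine ⟨8, q, ?_, ?_, ?_⟩
    · intro v
      simp [eZf, lapN_chi8]
    · simp [eZf, lapN_chi8]
      exact_mod_cast hq0
    · have hfun : (fun v => (eZf a b c 8 v).toNat) = cnt a b c := by
        funext v
        simp [eZf, lapN_chi8]
      rw [hfun]
      exact hburn

end Gon18
namespace Gon18

def pad9 : Fin 9 := ⟨8, by omega⟩

lemma pad9_val : (pad9 : ℕ) = 8 := rfl

lemma bridge (e : Fin 8 → ℕ) (h : ∑ v, e v ≤ 3) :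
    ∃ a b c : Fin 9, ∀ v, e v = cnt a b c v := by
  classical
  obtain ⟨l, hlen, hcnt⟩ : ∃ l : List (Fin 8), l.length ≤ 3 ∧ ∀ v, l.count v = e v := by
    set m : Multiset (Fin 8) := ∑ v : Fin 8, Multiset.replicate (e v) v with hm
    have hcount : ∀ v, m.count v = e v := by
      intro v
      rw [hm, Multiset.count_sum']
      rw [Finset.sum_eq_single v]
      · simp [Multiset.count_replicate]
      · intro u _ hu
        simp [Multiset.count_replicate, hu]
      · intro hv
        exact absurd (Finset.mem_univ v) hv
    have hcardsum : ∀ (s : Finset (Fin 8)), Multiset.card (∑ v ∈ s, Multiset.replicate (e v) v)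
        = ∑ v ∈ s, e v := by
      intro s
      induction s using Finset.cons_induction with
      | empty => simp
      | cons a s ha ih => simp [Finset.sum_cons, ih]
    refine ⟨m.toList, ?_, ?_⟩
    · rw [Multiset.length_toList, hm, hcardsum]; exact h
    · intro v
      calc m.toList.count v = Multiset.count v (Multiset.ofList m.toList) :=
            (Multiset.coe_count v m.toList).symm
        _ = Multiset.count v m := by rw [Multiset.coe_toList]
        _ = e v := hcount v
  match l, hlen, hcnt with
  | [], _, hcnt =>
    refine ⟨pad9, pad9, pad9, fun v => ?_⟩
    have hv := v.isLt
    rw [← hcnt v]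
    simp only [List.count_nil, cnt, pad9_val]
    simp only [show ¬ (8 = (v:ℕ)) by omega, if_false]
  | [x], _, hcnt =>
    refine ⟨x.castSucc, pad9, pad9, fun v => ?_⟩
    have hv := v.isLt
    rw [← hcnt v]
    simp only [List.count_cons, List.count_nil, cnt, pad9_val, Fin.coe_castSucc,
      beq_iff_eq, Fin.ext_iff]
    simp only [show ¬ (8 = (v:ℕ)) by omega, if_false]
    split_ifs <;> omega
  | [x, y], _, hcnt =>
    refine ⟨x.castSucc, y.castSucc, pad9, fun v => ?_⟩
    have hv := v.isLt
    rw [← hcnt v]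
    simp only [List.count_cons, List.count_nil, cnt, pad9_val, Fin.coe_castSucc,
      beq_iff_eq, Fin.ext_iff]
    simp only [show ¬ (8 = (v:ℕ)) by omega, if_false]
    split_ifs <;> omega
  | [x, y, z], _, hcnt =>
    refine ⟨x.castSucc, y.castSucc, z.castSucc, fun v => ?_⟩
    have hv := v.isLt
    rw [← hcnt v]
    simp only [List.count_cons, List.count_nil, cnt, pad9_val, Fin.coe_castSucc,
      beq_iff_eq, Fin.ext_iff]
    split_ifs <;> omega
  | x :: y :: z :: w :: rest, hlen, _ =>
    simp at hlen; omega

end Gon18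
namespace Gon18

lemma lower_bound (D : V4 → ℤ) (hPR : PositiveRank (rookGraph F4) D) : 4 ≤ degD D := by
  by_contra hlt
  push_neg at hlt
  obtain ⟨E, hED, hEeff, -⟩ := hPR (σ8 0)
  have hdegE : degD E = degD D := degD_of_linEquiv hED
  set eN : Fin 8 → ℕ := fun i => (E (σ8 i)).toNat with heN
  have hcast : ∀ i, (eN i : ℤ) = E (σ8 i) := fun i => Int.toNat_of_nonneg (hEeff _)
  have hsum : ∑ i, eN i ≤ 3 := by
    have h1 : (∑ i, (eN i : ℤ)) = degD E := by
      rw [degD_eq]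
      exact Finset.sum_congr rfl fun i _ => hcast i
    have h2 : ((∑ i, eN i : ℕ) : ℤ) ≤ 3 := by
      push_cast
      rw [h1, hdegE]
      omega
    exact_mod_cast h2
  obtain ⟨a, b, c, habc⟩ := bridge eN hsum
  obtain ⟨j, q, heff', hq0, hburn⟩ := pack a b c
  set gx : V4 → ℤ := fun v => chi j (e8.symm v) with hgx
  have hgxσ : (fun i => gx (σ8 i)) = chi j := by
    funext i
    rw [hgx]
    simp [symm_σ8]
  set E' : V4 → ℤ := fun v => E v + lap (rookGraph F4) gx v with hE'
  have hE'σ : ∀ i, E' (σ8 i) = eZf a b c j i := by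
    intro i
    rw [hE']
    show E (σ8 i) + lap (rookGraph F4) gx (σ8 i) = _
    rw [lap_eq_lapN, hgxσ, ← hcast i, habc i]
    rfl
  obtain ⟨D'', hD''eq, hD''eff, hD''pos⟩ := hPR (σ8 q)
  have hEE' : LinEquiv (rookGraph F4) E E' := ⟨gx, fun w => rfl⟩
  have hE'D'' : LinEquiv (rookGraph F4) E' D'' :=
    linEquiv_trans (linEquiv_symm hEE') (linEquiv_trans (linEquiv_symm hED) hD''eq)
  obtain ⟨hf, hhf⟩ := hE'D''
  set gq : Fin 8 → ℤ := fun i => hf (σ8 i) with hgq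
  have hDi : ∀ i, D'' (σ8 i) = eZf a b c j i + lapN gq i := by
    intro i
    rw [hhf (σ8 i), hE'σ i, lap_eq_lapN]
  obtain ⟨S, hSne, hqS, hSfire⟩ := fire_max (eZf a b c j) gq q hq0
    (fun v => by rw [← hDi v]; exact hD''eff _)
    (by rw [← hDi q]; exact hD''pos)
  obtain ⟨v, hvS, hvlt⟩ := burn_sound (fun v => (eZf a b c j v).toNat) q
    (burnsAllL_sound _ _ hburn) S hSne hqS
  have h0 : 0 ≤ eZf a b c j v := heff' v
  have hfire := hSfire v hvS
  omega

def Dup : V4 → ℤ := fun v => if (v : ℕ × ℕ).2 = 1 then 0 else 1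

def fN0 : Fin 8 → ℤ := ![0,0,0,0,0,0,0,0]
def fN1 : Fin 8 → ℤ := ![0,0,0,0,1,1,1,1]
def fN2 : Fin 8 → ℤ := ![1,1,0,0,2,2,2,2]

lemma upper_cases : ∀ i : Fin 8, ∃ fN : Fin 8 → ℤ,
    (∀ w : Fin 8, 0 ≤ Dup (σ8 w) + lapN fN w) ∧ 0 < Dup (σ8 i) + lapN fN i := by
  intro i
  fin_cases i
  · exact ⟨fN1, by decide, by decide⟩
  · exact ⟨fN1, by decide, by decide⟩
  · exact ⟨fN2, by decide, by decide⟩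
  · exact ⟨fN2, by decide, by decide⟩
  · exact ⟨fN0, by decide, by decide⟩
  · exact ⟨fN0, by decide, by decide⟩
  · exact ⟨fN0, by decide, by decide⟩
  · exact ⟨fN0, by decide, by decide⟩

lemma Dup_PR : PositiveRank (rookGraph F4) Dup := by
  intro v
  obtain ⟨fN, heff, hpos⟩ := upper_cases (e8.symm v)
  set f : V4 → ℤ := fun u => fN (e8.symm u) with hfdef
  have hfσ : (fun i => f (σ8 i)) = fN := by
    funext i
    rw [hfdef]
    simp [symm_σ8]
  have hkey : ∀ w : V4, Dup w + lap (rookGraph F4) f w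
      = Dup (σ8 (e8.symm w)) + lapN fN (e8.symm w) := by
    intro w
    conv_lhs => rw [← σ8_symm w]
    rw [lap_eq_lapN, hfσ]
  refine ⟨fun w => Dup w + lap (rookGraph F4) f w, ⟨f, fun w => rfl⟩, ?_, ?_⟩
  · intro w
    show 0 ≤ Dup w + lap (rookGraph F4) f w
    rw [hkey w]
    exact heff _
  · show 0 < Dup v + lap (rookGraph F4) f v
    rw [hkey v]
    exact hpos

lemma Dup_deg : degD Dup = 4 := by
  rw [degD_eq]
  decide

end Gon18

theorem stmt18 : IsLeast (gonSet F4) 4 := by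
  constructor
  · exact ⟨Gon18.Dup, Gon18.Dup_PR, Gon18.Dup_deg⟩
  · rintro d ⟨D, hPR, rfl⟩
    exact Gon18.lower_bound D hPR
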